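/- With V = S × Ω and Ω acting by ω·(s,ω') = (s, ωω'), the operators ↑^ω τ := Σ_{v∈N_τ} ↑_v^ω τ form a family of commuting derivations for all pre-Lie products ▷^{a,ω'}: that is, ↑^ω(σ ▷^{a,ω'} τ) = (↑^ω σ) ▷^{a,ω'} τ + σ ▷^{a,ω'} (↑^ω τ), and ↑^ω ∘ ↑^{ω'} = ↑^{ω'} ∘ ↑^ω. -/

import Mathlib

/-- Planar rooted trees with vertex decorations in `V` and edge decorations in `E`. -/
inductive RT (V E : Type) : Type where
  | node : V → List (E × RT V E) → RT V E

/-- One-step reordering of children (at the root or at a deeper vertex). -/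
inductive Swap {V E : Type} : RT V E → RT V E → Prop where
  | here (v : V) (l₁ l₂ : List (E × RT V E)) (p q : E × RT V E) :
      Swap (.node v (l₁ ++ p :: q :: l₂)) (.node v (l₁ ++ q :: p :: l₂))
  | child (v : V) (l₁ l₂ : List (E × RT V E)) (e : E) {t t' : RT V E} :
      Swap t t' → Swap (.node v (l₁ ++ (e, t) :: l₂)) (.node v (l₁ ++ (e, t') :: l₂))

/-- (Non-planar) decorated rooted trees: planar trees modulo reordering of children. -/
def QT (V E : Type) : Type := Quot (@Swap V E)

/-- The linear span of decorated rooted trees, with rational coefficients. -/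
abbrev Span (V E : Type) : Type := QT V E →₀ ℚ

def qt {V E : Type} (t : RT V E) : QT V E := Quot.mk _ t

/-- A tree, as a basis vector of the span. -/
noncomputable def bas {V E : Type} (t : RT V E) : Span V E := Finsupp.single (qt t) 1

/-- The element of the span given by a list of trees (sum with multiplicity). -/
noncomputable def ofList {V E : Type} (l : List (RT V E)) : Span V E := (l.map bas).sum

/-- Formal rational combination of planar trees, as an element of the span. -/
noncomputable def combo {V E : Type} (l : List (ℚ × RT V E)) : Span V E :=
  (l.map fun p => p.1 • bas p.2).sum

mutual
/-- List of the graftings of `σ` on each vertex of a tree, via a new `a`-edge. -/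
def graftT {V E : Type} (a : E) (σ : RT V E) : RT V E → List (RT V E)
  | .node v l => .node v ((a, σ) :: l) :: (graftL a σ l).map (.node v)
/-- Auxiliary: graftings of `σ` inside one of the listed subtrees. -/
def graftL {V E : Type} (a : E) (σ : RT V E) :
    List (E × RT V E) → List (List (E × RT V E))
  | [] => []
  | (e, t) :: r =>
      ((graftT a σ t).map fun t' => (e, t') :: r)
        ++ ((graftL a σ r).map fun r' => (e, t) :: r')
end

mutual
/-- Graftings of `σ` on each vertex of a tree via a new `a`-edge, additionally acting by
`act ω` on the decoration of the target vertex: the summands of `σ ▷^{a,ω} τ`. -/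
def graftMT {V E Ω : Type} (act : Ω → V → V) (a : E) (ω : Ω) (σ : RT V E) :
    RT V E → List (RT V E)
  | .node v l => .node (act ω v) ((a, σ) :: l) :: (graftML act a ω σ l).map (.node v)
/-- Auxiliary: graftings of `σ` inside one of the listed subtrees. -/
def graftML {V E Ω : Type} (act : Ω → V → V) (a : E) (ω : Ω) (σ : RT V E) :
    List (E × RT V E) → List (List (E × RT V E))
  | [] => []
  | (e, t) :: r =>
      ((graftMT act a ω σ t).map fun t' => (e, t') :: r)
        ++ ((graftML act a ω σ r).map fun r' => (e, t) :: r')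
end

mutual
/-- The summands of the operator `↑^ω τ = Σ_{v ∈ N_τ} ↑_v^ω τ`, which acts by
`act ω` on the decoration of a single vertex `v`. -/
def upT {V E Ω : Type} (act : Ω → V → V) (ω : Ω) : RT V E → List (RT V E)
  | .node v l => .node (act ω v) l :: (upL act ω l).map (.node v)
/-- Auxiliary: the operator `↑_v^ω` applied at vertices inside the listed subtrees. -/
def upL {V E Ω : Type} (act : Ω → V → V) (ω : Ω) :
    List (E × RT V E) → List (List (E × RT V E))
  | [] => []
  | (e, t) :: r =>
      ((upT act ω t).map fun t' => (e, t') :: r)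
        ++ ((upL act ω r).map fun r' => (e, t) :: r')
end

section Aux

variable {α β : Type*} {M N : Type*} [AddCommMonoid M] [AddCommMonoid N]

/-- Sum of `f` over a list. -/
def Ssum (l : List α) (f : α → M) : M := (l.map f).sum

@[simp] lemma Ssum_nil (f : α → M) : Ssum ([] : List α) f = 0 := rfl

@[simp] lemma Ssum_cons (a : α) (l : List α) (f : α → M) :
    Ssum (a :: l) f = f a + Ssum l f := rfl

@[simp] lemma Ssum_append (l₁ l₂ : List α) (f : α → M) :
    Ssum (l₁ ++ l₂) f = Ssum l₁ f + Ssum l₂ f := by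
  simp [Ssum]

@[simp] lemma Ssum_map (g : β → α) (l : List β) (f : α → M) :
    Ssum (l.map g) f = Ssum l (fun b => f (g b)) := by
  simp only [Ssum, List.map_map]; rfl

@[simp] lemma Ssum_zero (l : List α) : Ssum l (fun _ => (0 : M)) = 0 := by
  induction l with
  | nil => rfl
  | cons a l ih => simp [ih]

@[simp] lemma Ssum_add (l : List α) (f g : α → M) :
    Ssum l (fun x => f x + g x) = Ssum l f + Ssum l g := by
  induction l with
  | nil => simp
  | cons a l ih => simp [ih]; abel

lemma Ssum_comm (l : List α) (l' : List β) (f : α → β → M) :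
    Ssum l (fun a => Ssum l' (f a)) = Ssum l' (fun b => Ssum l (fun a => f a b)) := by
  induction l with
  | nil => simp
  | cons a l ih => simp [ih]

lemma map_Ssum (F : M →+ N) (l : List α) (f : α → M) :
    F (Ssum l f) = Ssum l (fun x => F (f x)) := by
  induction l with
  | nil => simp [Ssum_nil]
  | cons a l ih => simp [ih]

lemma Ssum_congr (l : List α) {f g : α → M} (h : ∀ x, f x = g x) :
    Ssum l f = Ssum l g := by
  induction l with
  | nil => simp
  | cons a l ih => simp [ih, h]

lemma linM_Ssum {M N : Type*} [AddCommMonoid M] [AddCommMonoid N]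
    [Module ℚ M] [Module ℚ N] (F : M →ₗ[ℚ] N) (l : List α) (f : α → M) :
    F (Ssum l f) = Ssum l (fun x => F (f x)) :=
  map_Ssum F.toAddMonoidHom l f

lemma bil_Ssum_left {M : Type*} [AddCommMonoid M] [Module ℚ M]
    (G : M →ₗ[ℚ] M →ₗ[ℚ] M) (l : List α) (f : α → M) (z : M) :
    G (Ssum l f) z = Ssum l (fun x => G (f x) z) := by
  rw [show G (Ssum l f) z = LinearMap.applyₗ z (G (Ssum l f)) from rfl,
    linM_Ssum G l f, linM_Ssum (LinearMap.applyₗ z)]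
  rfl

end Aux

section Key

variable {V E Ω : Type} {M : Type*} [AddCommMonoid M]

mutual
theorem keyT (act : Ω → V → V)
    (hcomm : ∀ (ω ω' : Ω) (v : V), act ω (act ω' v) = act ω' (act ω v))
    (a : E) (ω ω' : Ω) (σ : RT V E) (τ : RT V E) (ψ : RT V E → M) :
    Ssum (graftMT act a ω' σ τ) (fun t => Ssum (upT act ω t) ψ)
      = Ssum (upT act ω σ) (fun s' => Ssum (graftMT act a ω' s' τ) ψ)
        + Ssum (upT act ω τ) (fun t' => Ssum (graftMT act a ω' σ t') ψ) := by
  match τ with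
  | .node v l =>
    have hL := keyL act hcomm a ω ω' σ l (fun m => ψ (.node v m))
    simp only [graftMT, upT, upL, graftML, Ssum_cons, Ssum_map, Ssum_append, Ssum_add] at *
    rw [hL, hcomm]
    abel

theorem keyL (act : Ω → V → V)
    (hcomm : ∀ (ω ω' : Ω) (v : V), act ω (act ω' v) = act ω' (act ω v))
    (a : E) (ω ω' : Ω) (σ : RT V E) (l : List (E × RT V E))
    (φ : List (E × RT V E) → M) :
    Ssum (graftML act a ω' σ l) (fun m => Ssum (upL act ω m) φ)
      = Ssum (upT act ω σ) (fun s' => Ssum (graftML act a ω' s' l) φ)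
        + Ssum (upL act ω l) (fun m => Ssum (graftML act a ω' σ m) φ) := by
  match l with
  | [] => simp [graftML, upL]
  | (e, t) :: r =>
    have hT := keyT act hcomm a ω ω' σ t (fun u => φ ((e, u) :: r))
    have hR := keyL act hcomm a ω ω' σ r (fun m => φ ((e, t) :: m))
    have hc1 := Ssum_comm (graftMT act a ω' σ t) (upL act ω r)
      (fun t₁ m => φ ((e, t₁) :: m))
    have hc2 := Ssum_comm (graftML act a ω' σ r) (upT act ω t)
      (fun r₁ u => φ ((e, u) :: r₁))
    simp only [graftML, upL, graftMT, upT, Ssum_cons, Ssum_map, Ssum_append,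
      Ssum_add] at *
    rw [hT, hR, hc1, hc2]
    abel
end

mutual
theorem comT (act : Ω → V → V)
    (hcomm : ∀ (ω ω' : Ω) (v : V), act ω (act ω' v) = act ω' (act ω v))
    (ω ω' : Ω) (τ : RT V E) (ψ : RT V E → M) :
    Ssum (upT act ω' τ) (fun t => Ssum (upT act ω t) ψ)
      = Ssum (upT act ω τ) (fun t => Ssum (upT act ω' t) ψ) := by
  match τ with
  | .node v l =>
    have hL := comL act hcomm ω ω' l (fun m => ψ (.node v m))
    simp only [upT, upL, Ssum_cons, Ssum_map, Ssum_append, Ssum_add] at *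
    rw [hL, hcomm]
    abel

theorem comL (act : Ω → V → V)
    (hcomm : ∀ (ω ω' : Ω) (v : V), act ω (act ω' v) = act ω' (act ω v))
    (ω ω' : Ω) (l : List (E × RT V E)) (φ : List (E × RT V E) → M) :
    Ssum (upL act ω' l) (fun m => Ssum (upL act ω m) φ)
      = Ssum (upL act ω l) (fun m => Ssum (upL act ω' m) φ) := by
  match l with
  | [] => simp [upL]
  | (e, t) :: r =>
    have hT := comT act hcomm ω ω' t (fun u => φ ((e, u) :: r))
    have hR := comL act hcomm ω ω' r (fun m => φ ((e, t) :: m))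
    have hc1 := Ssum_comm (upT act ω' t) (upL act ω r) (fun u m => φ ((e, u) :: m))
    have hc2 := Ssum_comm (upL act ω' r) (upT act ω t) (fun m u => φ ((e, u) :: m))
    simp only [upL, upT, Ssum_cons, Ssum_map, Ssum_append, Ssum_add] at *
    rw [hT, hR, hc1, hc2]
    abel
end

end Key

/-- **`(↑^ω)` is a family of commuting derivations for the products `▷^{a,ω'}`.**
Take `V = S × Ω` with `Ω` a commutative monoid acting by `ω·(s,ω') = (s, ω*ω')`.  Let
`U ω` be the linear extension of `↑^ω := Σ_{v} ↑_v^ω` and `g a ω'` the bilinear extension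
of the grafting `▷^{a,ω'}` to the span of decorated rooted trees.  Then
`↑^ω (σ ▷^{a,ω'} τ) = (↑^ω σ) ▷^{a,ω'} τ + σ ▷^{a,ω'} (↑^ω τ)` and
`↑^ω ∘ ↑^{ω'} = ↑^{ω'} ∘ ↑^ω`. -/
theorem up_commuting_derivations {S E Ω : Type} [CommMonoid Ω]
    (U : Ω → Span (S × Ω) E →ₗ[ℚ] Span (S × Ω) E)
    (hU : ∀ (ω : Ω) (τ : RT (S × Ω) E),
      U ω (bas τ) = ofList (upT (fun ω p => (p.1, ω * p.2)) ω τ))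
    (g : E → Ω → Span (S × Ω) E →ₗ[ℚ] Span (S × Ω) E →ₗ[ℚ] Span (S × Ω) E)
    (hg : ∀ (a : E) (ω' : Ω) (σ τ : RT (S × Ω) E),
      g a ω' (bas σ) (bas τ)
        = ofList (graftMT (fun ω p => (p.1, ω * p.2)) a ω' σ τ)) :
    (∀ (ω ω' : Ω) (a : E) (x y : Span (S × Ω) E),
        U ω (g a ω' x y) = g a ω' (U ω x) y + g a ω' x (U ω y)) ∧
    (∀ (ω ω' : Ω) (x : Span (S × Ω) E), U ω (U ω' x) = U ω' (U ω x)) := by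
  set A : Ω → (S × Ω) → (S × Ω) := fun ω p => (p.1, ω * p.2) with hA
  have hcomm : ∀ (ω ω' : Ω) (v : S × Ω), A ω (A ω' v) = A ω' (A ω v) := by
    intro ω ω' v
    simp [hA, mul_left_comm]
  have hofL : ∀ (l : List (RT (S × Ω) E)), ofList l = Ssum l bas := fun _ => rfl
  have hUS : ∀ (ω : Ω) (l : List (RT (S × Ω) E)),
      U ω (Ssum l bas) = Ssum l (fun t => Ssum (upT A ω t) bas) := by
    intro ω l
    rw [linM_Ssum]
    exact Ssum_congr _ (fun t => by rw [hU, hofL])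
  have core1 : ∀ (ω ω' : Ω) (a : E) (σ τ : RT (S × Ω) E),
      U ω (g a ω' (bas σ) (bas τ))
        = g a ω' (U ω (bas σ)) (bas τ) + g a ω' (bas σ) (U ω (bas τ)) := by
    intro ω ω' a σ τ
    rw [hg, hofL, hUS, keyT A hcomm a ω ω' σ τ bas, hU, hU, hofL, hofL,
      bil_Ssum_left (g a ω'), linM_Ssum (g a ω' (bas σ))]
    congr 1
    · exact Ssum_congr _ (fun s' => by rw [hg, hofL])
    · exact Ssum_congr _ (fun t' => by rw [hg, hofL])
  have core2 : ∀ (ω ω' : Ω) (τ : RT (S × Ω) E),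
      U ω (U ω' (bas τ)) = U ω' (U ω (bas τ)) := by
    intro ω ω' τ
    rw [hU, hU, hofL, hofL, hUS, hUS, comT A hcomm ω ω' τ bas]
  have hsingle_smul : ∀ (q : QT (S × Ω) E) (c : ℚ), ∃ t : RT (S × Ω) E,
      (Finsupp.single q c : Span (S × Ω) E) = c • bas t := by
    intro q c
    obtain ⟨t, rfl⟩ := Quot.exists_rep q
    exact ⟨t, by
      show _ = c • Finsupp.single (Quot.mk _ t) (1 : ℚ)
      rw [Finsupp.smul_single, smul_eq_mul, mul_one]
      rfl⟩
  constructor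
  · intro ω ω' a x y
    induction x using Finsupp.induction_linear with
    | zero => simp
    | add p q hp hq =>
      simp only [map_add, LinearMap.add_apply, hp, hq]
      abel
    | single qx c =>
      induction y using Finsupp.induction_linear with
      | zero => simp
      | add p q hp hq =>
        simp only [map_add, hp, hq]
        abel
      | single qy d =>
        obtain ⟨σ, hσ⟩ := hsingle_smul qx c
        obtain ⟨τ, hτ⟩ := hsingle_smul qy d
        rw [hσ, hτ]
        simp only [map_smul, LinearMap.smul_apply, LinearMap.map_smul]
        rw [core1 ω ω' a σ τ]
        simp only [smul_add]
  · intro ω ω' x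
    induction x using Finsupp.induction_linear with
    | zero => simp
    | add p q hp hq => simp only [map_add, hp, hq]
    | single qx c =>
      obtain ⟨τ, hτ⟩ := hsingle_smul qx c
      rw [hτ]
      simp only [map_smul, core2 ω ω' τ]
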